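/- Let B(x, p+k) and B(y, n-p) be Euclidean balls in ℝ^d with |y - x| = n ∈ ℕ, 1 ≤ p ≤ n-1, and 0 < k ≤ n - p. Then the Lebesgue measure of B(x, p+k) ∩ B(y, n-p) is at most c k^{(d+1)/2} (min(p+k, n-p))^{(d-1)/2} for a constant c depending only on d. -/

import Mathlib

open MeasureTheory Metric

private theorem lensAux (A s r c : ℝ) (h0 : 0 ≤ s) (h1 : s ≤ A) (hA : A < r)
    (h2 : A - s ≤ c) : A ^ 2 - s ^ 2 ≤ 2 * c * r := by nlinarith

theorem stmt_5 (d : ℕ) (hd : 1 ≤ d) :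
    ∃ c : ℝ, 0 < c ∧ ∀ (x y : EuclideanSpace ℝ (Fin d)) (n p : ℕ) (k : ℝ),
      dist y x = n → 1 ≤ p → p ≤ n - 1 → 0 < k → k ≤ (n : ℝ) - p →
      (volume (ball x ((p : ℝ) + k) ∩ ball y ((n : ℝ) - p))).toReal
        ≤ c * k ^ (((d : ℝ) + 1) / 2) * (min ((p : ℝ) + k) ((n : ℝ) - p)) ^ (((d : ℝ) - 1) / 2) := by
  refine ⟨(2:ℝ) ^ (d - 1) * (2:ℝ) ^ (((d : ℝ) - 1) / 2), by positivity, ?_⟩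
  intro x y n p k hdist hp1 hpn hk hkn
  have hp1' : (1 : ℝ) ≤ p := by exact_mod_cast hp1
  have hnp : (p : ℝ) + 1 ≤ n := by
    have h : p + 1 ≤ n := by omega
    exact_mod_cast h
  set r1 : ℝ := (p : ℝ) + k with hr1def
  set r2 : ℝ := (n : ℝ) - p with hr2def
  have hr2 : 1 ≤ r2 := by simp only [hr2def]; linarith
  have hr1 : 0 < r1 := by simp only [hr1def]; linarith
  set m : ℝ := min r1 r2 with hmdef
  have hm : 0 < m := lt_min hr1 (by linarith)
  set R : ℝ := Real.sqrt (2 * k * m) with hRdef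
  have hR0 : 0 ≤ R := Real.sqrt_nonneg _
  have hR2 : R ^ 2 = 2 * k * m := Real.sq_sqrt (by positivity)
  have hn0 : (0:ℝ) < n := by linarith
  -- the unit vector from x to y
  set u : EuclideanSpace ℝ (Fin d) := ((n:ℝ))⁻¹ • (y - x) with hu
  have hynorm : ‖y - x‖ = (n : ℝ) := by rw [← dist_eq_norm]; exact hdist
  have hunorm : ‖u‖ = 1 := by
    rw [hu, norm_smul, hynorm, norm_inv, Real.norm_eq_abs, abs_of_pos hn0]
    field_simp
  have hnu : (n : ℝ) • u = y - x := by
    rw [hu, smul_smul]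
    rw [mul_inv_cancel₀ (ne_of_gt hn0), one_smul]
  clear_value u
  clear_value r1 r2 m R
  -- orthonormal basis whose first vector is u
  set i0 : Fin d := ⟨0, hd⟩ with hi0
  have hcard : Module.finrank ℝ (EuclideanSpace ℝ (Fin d)) = Fintype.card (Fin d) := by
    simp
  have horth : Orthonormal ℝ (({i0} : Set (Fin d)).restrict (fun _ => u)) := by
    constructor
    · intro i; exact hunorm
    · intro i j hij
      exact absurd (Subsingleton.elim i j) hij
  obtain ⟨b, hb⟩ := horth.exists_orthonormalBasis_extension_of_card_eq hcard
  have hbi0 : b i0 = u := hb i0 rfl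
  -- the box
  set S : Fin d → Set ℝ := fun i =>
    if i = i0 then Set.Icc (p:ℝ) ((p:ℝ)+k) else Set.Icc (-R) R with hS
  have hSm : ∀ i, MeasurableSet (S i) := by
    intro i; rw [hS]; dsimp only; split <;> exact measurableSet_Icc
  set BoxPi : Set (Fin d → ℝ) := Set.univ.pi S with hBoxPi
  have hBoxPim : MeasurableSet BoxPi := MeasurableSet.univ_pi hSm
  set Box : Set (EuclideanSpace ℝ (Fin d)) :=
    (MeasurableEquiv.toLp 2 (Fin d → ℝ)).symm ⁻¹' BoxPi with hBox
  have hBoxm : MeasurableSet Box :=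
    (MeasurableEquiv.toLp 2 (Fin d → ℝ)).symm.measurable hBoxPim
  set f : EuclideanSpace ℝ (Fin d) → EuclideanSpace ℝ (Fin d) :=
    fun z => b.repr (z - x) with hf
  have hfmp : MeasurePreserving f volume volume :=
    b.measurePreserving_repr.comp (measurePreserving_sub_right volume x)
  -- containment
  have hsub : ball x r1 ∩ ball y r2 ⊆ f ⁻¹' Box := by
    intro z hz
    obtain ⟨hz1, hz2⟩ := hz
    rw [mem_ball, dist_eq_norm] at hz1 hz2
    set w : EuclideanSpace ℝ (Fin d) := z - x with hw
    clear_value w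
    set t : ℝ := b.repr w i0 with ht
    have htinner : t = inner ℝ u w := by
      rw [ht, b.repr_apply_apply, hbi0]
    have ht_le : t ≤ ‖w‖ := by
      rw [htinner]
      calc (inner ℝ u w : ℝ) ≤ ‖u‖ * ‖w‖ := real_inner_le_norm u w
        _ = ‖w‖ := by rw [hunorm, one_mul]
    have hzy : z - y = w - (n:ℝ) • u := by
      rw [hnu, hw]; abel
    have hinner_zy : (inner ℝ u (z - y) : ℝ) = t - n := by
      rw [hzy, inner_sub_right, real_inner_smul_right, real_inner_self_eq_norm_sq,
        hunorm, htinner]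
      ring
    have habs : |t - (n:ℝ)| ≤ ‖z - y‖ := by
      rw [← hinner_zy]
      calc |(inner ℝ u (z - y) : ℝ)| ≤ ‖u‖ * ‖z - y‖ := abs_real_inner_le_norm u (z - y)
        _ = ‖z - y‖ := by rw [hunorm, one_mul]
    have htp : (p : ℝ) < t := by
      have h1 : -(‖z - y‖) ≤ t - n := neg_le_of_abs_le habs
      have : t - n > -((n:ℝ) - p) := by linarith
      linarith
    have hnt : (n : ℝ) - t ≤ ‖z - y‖ := by
      have := le_of_abs_le (abs_sub_comm t (n:ℝ) ▸ habs)
      linarith [le_abs_self ((n:ℝ) - t), abs_le.mp habs]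
    have hwnorm : ‖w‖ < r1 := hz1
    have htub : t < r1 := lt_of_le_of_lt ht_le hwnorm
    -- norm squared identity
    have hnormsq : ‖w‖ ^ 2 = ∑ j, (b.repr w j) ^ 2 := by
      rw [← b.repr.norm_map w, EuclideanSpace.norm_eq,
        Real.sq_sqrt (by positivity)]
      simp [Real.norm_eq_abs, sq_abs]
    -- second difference identity
    have hzy_sq : ‖z - y‖ ^ 2 - ((n:ℝ) - t) ^ 2 = ‖w‖ ^ 2 - t ^ 2 := by
      rw [hzy, norm_sub_sq_real, real_inner_smul_right, norm_smul, hunorm,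
        Real.norm_eq_abs, abs_of_pos hn0, real_inner_comm u w, ← htinner]
      ring
    have hbound1 : ‖w‖ ^ 2 - t ^ 2 ≤ 2 * k * r1 :=
      lensAux ‖w‖ t r1 k (by linarith) ht_le hwnorm (by rw [hr1def] at hwnorm; linarith)
    have hbound2 : ‖w‖ ^ 2 - t ^ 2 ≤ 2 * k * r2 := by
      rw [← hzy_sq]
      have hnt0 : (0:ℝ) ≤ (n:ℝ) - t := by rw [hr1def] at htub; linarith
      have hgap : ‖z - y‖ - ((n:ℝ) - t) ≤ k := by
        rw [hr1def] at htub; linarith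
      exact lensAux ‖z - y‖ ((n:ℝ) - t) r2 k hnt0 hnt hz2 hgap
    have hbound : ‖w‖ ^ 2 - t ^ 2 ≤ 2 * k * m := by
      rcases le_total r1 r2 with h | h
      · rw [hmdef, min_eq_left h]; exact hbound1
      · rw [hmdef, min_eq_right h]; exact hbound2
    -- membership in box
    show f z ∈ Box
    rw [hBox, Set.mem_preimage, hBoxPi, Set.mem_univ_pi]
    intro i
    rw [hS]
    dsimp only
    have hfi : (MeasurableEquiv.toLp 2 (Fin d → ℝ)).symm (f z) i = b.repr w i := by
      rw [hf, hw]; rfl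
    rw [hfi]
    split
    · next h =>
      subst h
      rw [← ht]
      refine ⟨le_of_lt htp, ?_⟩
      rw [← hr1def]
      exact le_of_lt htub
    · next h =>
      have hsum : (b.repr w i) ^ 2 + t ^ 2 ≤ ∑ j, (b.repr w j) ^ 2 := by
        have hsub' : ({i, i0} : Finset (Fin d)) ⊆ Finset.univ := Finset.subset_univ _
        have := Finset.sum_le_sum_of_subset_of_nonneg hsub'
          (fun j _ _ => sq_nonneg (b.repr w j))
        rwa [Finset.sum_pair h] at this
      have hsq : (b.repr w i) ^ 2 ≤ R ^ 2 := by
        rw [hR2]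
        have : (b.repr w i) ^ 2 ≤ ‖w‖ ^ 2 - t ^ 2 := by
          rw [hnormsq]; linarith
        linarith
      have habs' : |b.repr w i| ≤ R := by
        rw [← Real.sqrt_sq_eq_abs]
        calc Real.sqrt ((b.repr w i) ^ 2) ≤ Real.sqrt (R ^ 2) :=
          Real.sqrt_le_sqrt hsq
          _ = R := Real.sqrt_sq hR0
      exact abs_le.mp habs'
  -- volume computation
  have hvol_box : volume Box = ENNReal.ofReal k * ENNReal.ofReal (2 * R) ^ (d - 1) := by
    rw [hBox, (EuclideanSpace.volume_preserving_symm_measurableEquiv_toLp (Fin d)).measure_preimage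
      hBoxPim.nullMeasurableSet, hBoxPi, volume_pi_pi]
    rw [← Finset.prod_erase_mul _ _ (Finset.mem_univ i0)]
    have h1 : volume (S i0) = ENNReal.ofReal k := by
      rw [hS]; simp [Real.volume_Icc]
    have h2 : ∀ i ∈ Finset.univ.erase i0, volume (S i) = ENNReal.ofReal (2 * R) := by
      intro i hi
      have hne : i ≠ i0 := Finset.ne_of_mem_erase hi
      rw [hS]
      simp only [if_neg hne, Real.volume_Icc]
      congr 1
      ring
    rw [Finset.prod_congr rfl h2, Finset.prod_const, h1,
      Finset.card_erase_of_mem (Finset.mem_univ i0), Finset.card_univ, Fintype.card_fin]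
    ring
  have hle : volume (ball x r1 ∩ ball y r2) ≤ volume Box := by
    calc volume (ball x r1 ∩ ball y r2) ≤ volume (f ⁻¹' Box) :=
        measure_mono hsub
      _ = volume Box := hfmp.measure_preimage hBoxm.nullMeasurableSet
  have hfin : volume Box ≠ ⊤ := by
    rw [hvol_box]
    exact ENNReal.mul_ne_top ENNReal.ofReal_ne_top (ENNReal.pow_ne_top ENNReal.ofReal_ne_top)
  have htoReal : (volume (ball x r1 ∩ ball y r2)).toReal
      ≤ k * (2 * R) ^ (d - 1) := by
    have := ENNReal.toReal_mono hfin hle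
    rw [hvol_box, ENNReal.toReal_mul, ENNReal.toReal_pow,
      ENNReal.toReal_ofReal (le_of_lt hk), ENNReal.toReal_ofReal (by positivity)] at this
    exact this
  refine le_trans htoReal (le_of_eq ?_)
  -- final real arithmetic
  have hd1 : ((d - 1 : ℕ) : ℝ) = (d : ℝ) - 1 := by
    rw [Nat.cast_sub hd, Nat.cast_one]
  have hRpow : R ^ (d - 1) = (2 * k * m) ^ (((d:ℝ) - 1) / 2) := by
    rw [hRdef, ← Real.rpow_natCast (Real.sqrt (2*k*m)) (d-1), Real.sqrt_eq_rpow,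
      ← Real.rpow_mul (by positivity), hd1]
    congr 1
    ring
  have hmul : (2 * k * m) ^ (((d:ℝ) - 1) / 2)
      = 2 ^ (((d:ℝ) - 1) / 2) * k ^ (((d:ℝ) - 1) / 2) * m ^ (((d:ℝ) - 1) / 2) := by
    rw [Real.mul_rpow (by positivity) (le_of_lt hm),
      Real.mul_rpow (by norm_num) (le_of_lt hk)]
  have hkpow : k * k ^ (((d:ℝ) - 1) / 2) = k ^ (((d:ℝ) + 1) / 2) := by
    nth_rewrite 1 [← Real.rpow_one k]
    rw [← Real.rpow_add hk]
    congr 1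
    ring
  calc k * (2 * R) ^ (d - 1)
      = (2:ℝ) ^ (d - 1) * (k * R ^ (d - 1)) := by rw [mul_pow]; ring
    _ = (2:ℝ) ^ (d - 1) * (2:ℝ) ^ (((d:ℝ) - 1) / 2)
        * (k * k ^ (((d:ℝ) - 1) / 2)) * m ^ (((d:ℝ) - 1) / 2) := by
        rw [hRpow, hmul]; ring
    _ = (2:ℝ) ^ (d - 1) * (2:ℝ) ^ (((d:ℝ) - 1) / 2)
        * k ^ (((d:ℝ) + 1) / 2) * m ^ (((d:ℝ) - 1) / 2) := by rw [hkpow]
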